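/- (Theorem 1 of the paper.) Let σ̂_i be the i-th largest singular value of P_opt(Â). Then σ̂_i² ∈ [Δ_i² − (ε_opt + μ(C)), Δ_i² + (ε_opt + μ(C))], where ε_opt = ‖S − P_opt(Â)ᵀ P_opt(Â)‖₂, Δ_i is the i-th largest topic dominance (Δ_i = 0 for i > k), and μ(C) is the topic mingling. -/

import Mathlib

open scoped BigOperators
open Matrix
open scoped RealInnerProductSpace

noncomputable def frobNorm {r s : ℕ} (M : Matrix (Fin r) (Fin s) ℝ) : ℝ :=
  Real.sqrt (∑ i, ∑ j, M i j ^ 2)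

noncomputable def specNorm {r s : ℕ} (M : Matrix (Fin r) (Fin s) ℝ) : ℝ :=
  sSup {c : ℝ | ∃ x : Fin s → ℝ, (∑ j, x j ^ 2) = 1 ∧
    c = Real.sqrt (∑ i, (M.mulVec x i) ^ 2)}

/-- `σ` enumerates the singular values of `M` in nonincreasing order,
    padded with zeros beyond index `s`. -/
def IsSingularValues {r s : ℕ} (M : Matrix (Fin r) (Fin s) ℝ) (σ : ℕ → ℝ) : Prop :=
  Antitone σ ∧ (∀ i, 0 ≤ σ i) ∧ (∀ i, s ≤ i → σ i = 0) ∧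
  ∀ hH : (Mᵀ * M).IsHermitian,
    Multiset.map (fun i : Fin s => σ (i : ℕ) ^ 2) Finset.univ.val
      = Multiset.map hH.eigenvalues Finset.univ.val

section Helpers

lemma specNorm_nonneg' {r s : ℕ} (M : Matrix (Fin r) (Fin s) ℝ) : 0 ≤ specNorm M := by
  apply Real.sSup_nonneg
  rintro x ⟨y, -, rfl⟩
  exact Real.sqrt_nonneg _

lemma sqrt_le_specNorm {r s : ℕ} (M : Matrix (Fin r) (Fin s) ℝ) (x : Fin s → ℝ)
    (hx : (∑ j, x j ^ 2) = 1) :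
    Real.sqrt (∑ i, (M.mulVec x i) ^ 2) ≤ specNorm M := by
  have hb : BddAbove {c : ℝ | ∃ x : Fin s → ℝ, (∑ j, x j ^ 2) = 1 ∧
      c = Real.sqrt (∑ i, (M.mulVec x i) ^ 2)} := by
    refine ⟨Real.sqrt (∑ i, ∑ j, M i j ^ 2), ?_⟩
    rintro c ⟨y, hy, rfl⟩
    apply Real.sqrt_le_sqrt
    apply Finset.sum_le_sum
    intro i _
    calc (M.mulVec y i) ^ 2 = (∑ j, M i j * y j) ^ 2 := by rfl
      _ ≤ (∑ j, M i j ^ 2) * (∑ j, y j ^ 2) := Finset.sum_mul_sq_le_sq_mul_sq _ _ _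
      _ = ∑ j, M i j ^ 2 := by rw [hy, mul_one]
  exact le_csSup hb ⟨x, hx, rfl⟩

lemma abs_dot_mulVec_le {s : ℕ} (M : Matrix (Fin s) (Fin s) ℝ) (x : Fin s → ℝ)
    (hx : (∑ j, x j ^ 2) = 1) : |x ⬝ᵥ M.mulVec x| ≤ specNorm M := by
  refine le_trans ?_ (sqrt_le_specNorm M x hx)
  rw [← Real.sqrt_sq_eq_abs]
  apply Real.sqrt_le_sqrt
  calc (x ⬝ᵥ M.mulVec x) ^ 2 = (∑ j, x j * M.mulVec x j) ^ 2 := rfl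
    _ ≤ (∑ j, x j ^ 2) * (∑ j, (M.mulVec x j) ^ 2) := Finset.sum_mul_sq_le_sq_mul_sq _ _ _
    _ = _ := by rw [hx, one_mul]

variable {n : ℕ}

lemma euclid_inner_eq (x y : EuclideanSpace ℝ (Fin n)) : ⟪x, y⟫ = ∑ i, x i * y i := by
  simp [PiLp.inner_apply]
  exact Finset.sum_congr rfl fun i _ => mul_comm _ _

lemma repr_eq_zero_of_mem_span (b : OrthonormalBasis (Fin n) ℝ (EuclideanSpace ℝ (Fin n)))
    (T : Set (Fin n)) (x : EuclideanSpace ℝ (Fin n))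
    (hx : x ∈ Submodule.span ℝ (⇑b '' T)) {j : Fin n} (hj : j ∉ T) :
    b.repr x j = 0 := by
  rw [OrthonormalBasis.repr_apply_apply]
  induction hx using Submodule.span_induction with
  | mem y hy =>
      obtain ⟨t, ht, rfl⟩ := hy
      exact b.orthonormal.2 (fun h => hj (h ▸ ht))
  | zero => simp
  | add y z _ _ hy hz => rw [inner_add_right, hy, hz, add_zero]
  | smul c y _ hy => rw [inner_smul_right, hy, mul_zero]

lemma sum_sq_eq_sum_repr_sq (b : OrthonormalBasis (Fin n) ℝ (EuclideanSpace ℝ (Fin n)))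
    (x : EuclideanSpace ℝ (Fin n)) : ∑ d, x d ^ 2 = ∑ j, (b.repr x j) ^ 2 := by
  have h1 : (∑ j, b.repr x j • b j) = x := b.sum_repr x
  have h2 : ⟪x, x⟫ = ∑ j, (b.repr x j) ^ 2 := by
    have e := congrArg (fun y => ⟪x, y⟫) h1.symm
    simp only at e
    rw [e, inner_sum]
    refine Finset.sum_congr rfl fun j _ => ?_
    rw [real_inner_smul_right, real_inner_comm, ← OrthonormalBasis.repr_apply_apply, pow_two]
  rw [← h2, euclid_inner_eq]
  exact Finset.sum_congr rfl fun d _ => pow_two (x d)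

lemma dot_mulVec_eq_sum_eigen {M : Matrix (Fin n) (Fin n) ℝ} (hH : M.IsHermitian)
    (x : EuclideanSpace ℝ (Fin n)) :
    x ⬝ᵥ M.mulVec x = ∑ j, hH.eigenvalues j * (hH.eigenvectorBasis.repr x j) ^ 2 := by
  set b := hH.eigenvectorBasis with hb
  set c := fun j => b.repr x j with hc
  have h1 : (∑ j, c j • b j) = x := b.sum_repr x
  have key : ∀ j, M.mulVec (b j) = hH.eigenvalues j • (b j : EuclideanSpace ℝ (Fin n)) :=
    fun j => hH.mulVec_eigenvectorBasis j
  have h2 : M.mulVec x = ∑ j, (c j * hH.eigenvalues j) • (b j : EuclideanSpace ℝ (Fin n)) := by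
    conv_lhs => rw [← h1]
    have step : M.mulVec (∑ j, c j • (b j : EuclideanSpace ℝ (Fin n)))
        = ∑ j, c j • M.mulVec (b j) := by
      rw [← Matrix.mulVecLin_apply, map_sum]
      refine Finset.sum_congr rfl fun j _ => ?_
      rw [LinearMap.map_smul, Matrix.mulVecLin_apply]
    simp only [WithLp.ofLp_sum, WithLp.ofLp_smul]
    rw [step]
    refine Finset.sum_congr rfl fun j _ => ?_
    rw [key j, smul_smul]
  have h3 : x ⬝ᵥ M.mulVec x = ⟪x, (WithLp.toLp 2 (M.mulVec x) : EuclideanSpace ℝ (Fin n))⟫ := by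
    rw [euclid_inner_eq]; rfl
  rw [h3]
  calc ⟪x, (WithLp.toLp 2 (M.mulVec x) : EuclideanSpace ℝ (Fin n))⟫
      = ⟪x, ∑ j, (c j * hH.eigenvalues j) • (b j : EuclideanSpace ℝ (Fin n))⟫ := by rw [h2, WithLp.toLp_ofLp]
    _ = ∑ j, hH.eigenvalues j * (c j) ^ 2 := by
        rw [inner_sum]
        refine Finset.sum_congr rfl fun j _ => ?_
        rw [real_inner_smul_right, real_inner_comm, ← OrthonormalBasis.repr_apply_apply]
        show c j * hH.eigenvalues j * c j = hH.eigenvalues j * c j ^ 2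
        ring

lemma finrank_span_basis_image (b : OrthonormalBasis (Fin n) ℝ (EuclideanSpace ℝ (Fin n)))
    (T : Finset (Fin n)) :
    Module.finrank ℝ (Submodule.span ℝ (⇑b '' ↑T)) = T.card := by
  have li : LinearIndependent ℝ (⇑b ∘ ((↑) : {x // x ∈ T} → Fin n)) :=
    b.orthonormal.linearIndependent.comp _ Subtype.coe_injective
  have h := finrank_span_eq_card li
  have hr : Set.range (⇑b ∘ ((↑) : {x // x ∈ T} → Fin n)) = ⇑b '' ↑T := by
    rw [Set.range_comp, Subtype.range_coe]
  rw [← hr, h, Fintype.card_coe]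

lemma exists_unit_mem_inf (V W : Submodule ℝ (EuclideanSpace ℝ (Fin n)))
    (h : n < Module.finrank ℝ V + Module.finrank ℝ W) :
    ∃ x : EuclideanSpace ℝ (Fin n), x ∈ V ∧ x ∈ W ∧ ∑ d, x d ^ 2 = 1 := by
  have hsum := Submodule.finrank_sup_add_finrank_inf_eq V W
  have hle : Module.finrank ℝ ↥(V ⊔ W) ≤ n := by
    have := Submodule.finrank_le (V ⊔ W)
    rwa [finrank_euclideanSpace, Fintype.card_fin] at this
  have hpos : 0 < Module.finrank ℝ ↥(V ⊓ W) := by omega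
  have hne : V ⊓ W ≠ ⊥ := by
    intro hbot
    rw [hbot, finrank_bot] at hpos
    exact lt_irrefl 0 hpos
  obtain ⟨x, hxmem, hxne⟩ := Submodule.ne_bot_iff _ |>.mp hne
  have hx2 : 0 < ∑ d, x d ^ 2 := by
    have : ∃ d, x d ≠ 0 := by
      by_contra hc
      push_neg at hc
      exact hxne (by ext d; simpa using hc d)
    obtain ⟨d, hd⟩ := this
    have h1 : 0 < x d ^ 2 := by positivity
    have h2 : x d ^ 2 ≤ ∑ d, x d ^ 2 :=
      Finset.single_le_sum (fun e _ => sq_nonneg (x e)) (Finset.mem_univ d)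
    linarith
  set r := Real.sqrt (∑ d, x d ^ 2) with hr
  have hrpos : 0 < r := Real.sqrt_pos.mpr hx2
  refine ⟨r⁻¹ • x, V.smul_mem _ hxmem.1, W.smul_mem _ hxmem.2, ?_⟩
  have happ : ∀ d, (r⁻¹ • x) d = r⁻¹ * x d := fun d => rfl
  calc ∑ d, ((r⁻¹ • x) d) ^ 2 = ∑ d, (r⁻¹)^2 * (x d)^2 := by
        refine Finset.sum_congr rfl fun d _ => ?_
        rw [happ d]; ring
    _ = (r⁻¹)^2 * ∑ d, x d ^ 2 := by rw [← Finset.mul_sum]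
    _ = 1 := by
        rw [hr, inv_pow, Real.sq_sqrt hx2.le]
        exact inv_mul_cancel₀ hx2.ne'

lemma count_transfer (f g : Fin n → ℝ)
    (h : Multiset.map f Finset.univ.val = Multiset.map g Finset.univ.val)
    (p : ℝ → Prop) [DecidablePred p] :
    (Finset.univ.filter (fun j => p (f j))).card
      = (Finset.univ.filter (fun j => p (g j))).card := by
  have hc := congrArg (Multiset.countP p) h
  have e1 : Multiset.countP p (Multiset.map f Finset.univ.val)
      = (Finset.univ.filter (fun j => p (f j))).card := by rw [Multiset.countP_map]; rfl
  have e2 : Multiset.countP p (Multiset.map g Finset.univ.val)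
      = (Finset.univ.filter (fun j => p (g j))).card := by rw [Multiset.countP_map]; rfl
  rw [e1, e2] at hc
  exact hc

lemma le_card_filter_le {i : ℕ} (h : i < n) :
    i + 1 ≤ (Finset.univ.filter (fun j : Fin n => (j : ℕ) ≤ i)).card := by
  have hsub : (Finset.univ : Finset (Fin (i+1))).map (Fin.castLEEmb (by omega))
      ⊆ Finset.univ.filter (fun j : Fin n => (j : ℕ) ≤ i) := by
    intro j hj
    simp only [Finset.mem_map, Fin.castLEEmb_apply] at hj
    obtain ⟨j', -, rfl⟩ := hj
    simp [Fin.coe_castLE, Nat.lt_succ_iff.mp j'.isLt]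
  have := Finset.card_le_card hsub
  simpa using this

lemma le_card_filter_ge {i : ℕ} (h : i < n) :
    n - i ≤ (Finset.univ.filter (fun j : Fin n => i ≤ (j : ℕ))).card := by
  have hemb : Function.Injective (fun j : Fin (n - i) => (⟨i + (j : ℕ), by omega⟩ : Fin n)) := by
    intro a b hab
    simp only [Fin.mk.injEq] at hab
    exact Fin.ext (by omega)
  have hsub : (Finset.univ : Finset (Fin (n - i))).map ⟨_, hemb⟩
      ⊆ Finset.univ.filter (fun j : Fin n => i ≤ (j : ℕ)) := by
    intro j hj
    simp only [Finset.mem_map, Function.Embedding.coeFn_mk] at hj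
    obtain ⟨j', -, rfl⟩ := hj
    simp
  have := Finset.card_le_card hsub
  simpa using this

noncomputable def rowsMap {r : ℕ} (B : Fin r → Fin n → ℝ) :
    EuclideanSpace ℝ (Fin n) →ₗ[ℝ] (Fin r → ℝ) where
  toFun x := fun j => ∑ d, B j d * x d
  map_add' x y := by
    funext j
    simp only [PiLp.add_apply, mul_add, Finset.sum_add_distrib]
    rfl
  map_smul' c x := by
    funext j
    simp only [PiLp.smul_apply, smul_eq_mul, RingHom.id_apply, Pi.smul_apply]
    rw [Finset.mul_sum]
    exact Finset.sum_congr rfl fun d _ => by ring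

lemma finrank_ker_rowsMap {r : ℕ} (B : Fin r → Fin n → ℝ) :
    n - r ≤ Module.finrank ℝ (LinearMap.ker (rowsMap B)) := by
  have h1 := LinearMap.finrank_range_add_finrank_ker (rowsMap B)
  rw [finrank_euclideanSpace, Fintype.card_fin] at h1
  have h2 : Module.finrank ℝ (LinearMap.range (rowsMap B)) ≤ r := by
    have := Submodule.finrank_le (LinearMap.range (rowsMap B))
    simpa using this
  omega

lemma dot_S {k : ℕ} (Rel : Fin k → Fin n → ℝ) (S : Matrix (Fin n) (Fin n) ℝ)
    (hS : ∀ d d', S d d' = ∑ t, Rel t d * Rel t d') (x : Fin n → ℝ) :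
    x ⬝ᵥ S.mulVec x = ∑ t, (∑ d, Rel t d * x d) ^ 2 := by
  have lhs : x ⬝ᵥ S.mulVec x = ∑ d, ∑ d', ∑ t, (Rel t d * x d) * (Rel t d' * x d') := by
    simp only [dotProduct, Matrix.mulVec, hS, Finset.mul_sum, Finset.sum_mul]
    refine Finset.sum_congr rfl fun d _ => Finset.sum_congr rfl fun d' _ =>
      Finset.sum_congr rfl fun t _ => by ring
  rw [lhs]
  have swap1 : ∀ d : Fin n, ∑ d', ∑ t, (Rel t d * x d) * (Rel t d' * x d')
      = ∑ t, ∑ d', (Rel t d * x d) * (Rel t d' * x d') := fun d => Finset.sum_comm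
  simp only [swap1]
  rw [Finset.sum_comm]
  refine Finset.sum_congr rfl fun t _ => ?_
  rw [pow_two, Finset.sum_mul_sum]

lemma offdiag_abs_le {k : ℕ} (G : Matrix (Fin k) (Fin k) ℝ) (c : Fin k → ℝ) :
    |∑ t, ∑ t', if t ≠ t' then c t * c t' * G t t' else 0|
      ≤ Real.sqrt (∑ t, ∑ t', if t ≠ t' then (G t t') ^ 2 else 0) * ∑ t, c t ^ 2 := by
  set μ' := Real.sqrt (∑ t, ∑ t', if t ≠ t' then (G t t') ^ 2 else 0) with hμ'
  have hμnn : 0 ≤ ∑ t, ∑ t', if t ≠ t' then (G t t') ^ 2 else 0 :=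
    Finset.sum_nonneg fun t _ => Finset.sum_nonneg fun t' _ => by positivity
  set f : Fin k × Fin k → ℝ := fun p => if p.1 ≠ p.2 then c p.1 * c p.2 else 0 with hf
  set g : Fin k × Fin k → ℝ := fun p => if p.1 ≠ p.2 then G p.1 p.2 else 0 with hg
  have hX : (∑ t, ∑ t', if t ≠ t' then c t * c t' * G t t' else 0)
      = ∑ p ∈ Finset.univ ×ˢ Finset.univ, f p * g p := by
    rw [Finset.sum_product]
    refine Finset.sum_congr rfl fun t _ => Finset.sum_congr rfl fun t' _ => ?_
    by_cases h : t = t' <;> simp [hf, hg, h]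
  have hg2 : ∑ p ∈ Finset.univ ×ˢ Finset.univ, g p ^ 2
      = ∑ t, ∑ t', if t ≠ t' then (G t t') ^ 2 else 0 := by
    rw [Finset.sum_product]
    refine Finset.sum_congr rfl fun t _ => Finset.sum_congr rfl fun t' _ => ?_
    by_cases h : t = t' <;> simp [hg, h]
  have hf2 : ∑ p ∈ Finset.univ ×ˢ Finset.univ, f p ^ 2 ≤ (∑ t, c t ^ 2) ^ 2 := by
    have : ∀ p ∈ Finset.univ ×ˢ Finset.univ, f p ^ 2 ≤ (c p.1 * c p.2) ^ 2 := by
      intro p _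
      by_cases h : p.1 = p.2 <;> simp [hf, h]
      positivity
    refine le_trans (Finset.sum_le_sum this) ?_
    rw [pow_two, Finset.sum_mul_sum, Finset.sum_product]
    refine le_of_eq ?_
    refine Finset.sum_congr rfl fun t _ => Finset.sum_congr rfl fun t' _ => by ring
  have hcs := Finset.sum_mul_sq_le_sq_mul_sq (Finset.univ ×ˢ Finset.univ) f g
  rw [hX, ← Real.sqrt_sq_eq_abs]
  have hc2 : (0:ℝ) ≤ ∑ t, c t ^ 2 := Finset.sum_nonneg fun t _ => sq_nonneg _
  calc Real.sqrt ((∑ p ∈ Finset.univ ×ˢ Finset.univ, f p * g p) ^ 2)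
      ≤ Real.sqrt ((∑ t, c t ^ 2) ^ 2 * (∑ t, ∑ t', if t ≠ t' then (G t t') ^ 2 else 0)) := by
        apply Real.sqrt_le_sqrt
        refine le_trans hcs ?_
        rw [hg2]
        exact mul_le_mul_of_nonneg_right hf2 (by rw [← hg2]; positivity)
    _ = μ' * ∑ t, c t ^ 2 := by
        rw [Real.sqrt_mul (by positivity), Real.sqrt_sq hc2, hμ', mul_comm]

lemma quad_split {k : ℕ} (G : Matrix (Fin k) (Fin k) ℝ) (c : Fin k → ℝ) :
    ∑ t, ∑ t', c t * c t' * G t t'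
      = (∑ t, c t ^ 2 * G t t) + ∑ t, ∑ t', if t ≠ t' then c t * c t' * G t t' else 0 := by
  rw [← Finset.sum_add_distrib]
  refine Finset.sum_congr rfl fun t _ => ?_
  have hpt : ∀ t', c t * c t' * G t t'
      = (if t' = t then c t ^ 2 * G t t else 0)
        + (if t ≠ t' then c t * c t' * G t t' else 0) := by
    intro t'
    by_cases h : t = t'
    · subst h; simp [pow_two]
    · simp [h, Ne.symm h]
  calc ∑ t', c t * c t' * G t t'
      = ∑ t', ((if t' = t then c t ^ 2 * G t t else 0)
          + (if t ≠ t' then c t * c t' * G t t' else 0)) :=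
        Finset.sum_congr rfl fun t' _ => hpt t'
    _ = (∑ t', if t' = t then c t ^ 2 * G t t else 0)
          + ∑ t', if t ≠ t' then c t * c t' * G t t' else 0 := Finset.sum_add_distrib
    _ = c t ^ 2 * G t t + ∑ t', if t ≠ t' then c t * c t' * G t t' else 0 := by
        rw [Finset.sum_ite_eq' Finset.univ t (fun _ => c t ^ 2 * G t t)]
        simp

lemma quad_upper {k : ℕ} (G : Matrix (Fin k) (Fin k) ℝ) (c : Fin k → ℝ) (D : ℝ)
    (hdiag : ∀ t, c t ≠ 0 → G t t ≤ D) :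
    ∑ t, ∑ t', c t * c t' * G t t'
      ≤ (D + Real.sqrt (∑ t, ∑ t', if t ≠ t' then (G t t') ^ 2 else 0)) * ∑ t, c t ^ 2 := by
  rw [quad_split, add_mul]
  have h1 : ∑ t, c t ^ 2 * G t t ≤ D * ∑ t, c t ^ 2 := by
    rw [Finset.mul_sum]
    refine Finset.sum_le_sum fun t _ => ?_
    by_cases h : c t = 0
    · simp [h]
    · rw [mul_comm]; exact mul_le_mul_of_nonneg_right (hdiag t h) (sq_nonneg _)
  have h2 := (abs_le.mp (offdiag_abs_le G c)).2
  linarith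

lemma quad_lower {k : ℕ} (G : Matrix (Fin k) (Fin k) ℝ) (c : Fin k → ℝ) (D : ℝ)
    (hdiag : ∀ t, c t ≠ 0 → D ≤ G t t) :
    (D - Real.sqrt (∑ t, ∑ t', if t ≠ t' then (G t t') ^ 2 else 0)) * ∑ t, c t ^ 2
      ≤ ∑ t, ∑ t', c t * c t' * G t t' := by
  rw [quad_split, sub_mul]
  have h1 : D * ∑ t, c t ^ 2 ≤ ∑ t, c t ^ 2 * G t t := by
    rw [Finset.mul_sum]
    refine Finset.sum_le_sum fun t _ => ?_
    by_cases h : c t = 0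
    · simp [h]
    · rw [mul_comm (D)]; exact mul_le_mul_of_nonneg_left (hdiag t h) (sq_nonneg _)
  have h2 := (abs_le.mp (offdiag_abs_le G c)).1
  linarith

lemma alpha_ineq {k : ℕ} (Rel : Fin k → Fin n → ℝ) (a : Fin k → ℝ) (x : Fin n → ℝ)
    (hx : ∀ d, x d = ∑ t, a t * Rel t d) :
    (∑ d, x d ^ 2) ^ 2 ≤ (∑ t, a t ^ 2) * ∑ t, (∑ d, Rel t d * x d) ^ 2 := by
  have key : ∑ d, x d ^ 2 = ∑ t, a t * (∑ d, Rel t d * x d) := by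
    calc ∑ d, x d ^ 2 = ∑ d, (∑ t, a t * Rel t d) * x d := by
          refine Finset.sum_congr rfl fun d _ => ?_
          rw [pow_two, hx d]
      _ = ∑ d, ∑ t, a t * (Rel t d * x d) := by
          refine Finset.sum_congr rfl fun d _ => ?_
          rw [Finset.sum_mul]
          exact Finset.sum_congr rfl fun t _ => by ring
      _ = ∑ t, ∑ d, a t * (Rel t d * x d) := Finset.sum_comm
      _ = ∑ t, a t * (∑ d, Rel t d * x d) := by
          refine Finset.sum_congr rfl fun t _ => ?_
          rw [Finset.mul_sum]
  rw [key]
  exact Finset.sum_mul_sq_le_sq_mul_sq _ _ _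

lemma beta_eq {k : ℕ} (Rel : Fin k → Fin n → ℝ) (a : Fin k → ℝ) (x : Fin n → ℝ)
    (hx : ∀ d, x d = ∑ t, a t * Rel t d) :
    ∑ d, x d ^ 2 = ∑ t, ∑ t', a t * a t' * (∑ d, Rel t d * Rel t' d) := by
  calc ∑ d, x d ^ 2 = ∑ d, ∑ t, ∑ t', (a t * Rel t d) * (a t' * Rel t' d) := by
        refine Finset.sum_congr rfl fun d _ => ?_
        rw [pow_two, hx d, Finset.sum_mul_sum]
    _ = ∑ t, ∑ d, ∑ t', (a t * Rel t d) * (a t' * Rel t' d) := Finset.sum_comm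
    _ = ∑ t, ∑ t', ∑ d, (a t * Rel t d) * (a t' * Rel t' d) := by
        exact Finset.sum_congr rfl fun t _ => Finset.sum_comm
    _ = ∑ t, ∑ t', a t * a t' * (∑ d, Rel t d * Rel t' d) := by
        refine Finset.sum_congr rfl fun t _ => Finset.sum_congr rfl fun t' _ => ?_
        rw [Finset.mul_sum]
        exact Finset.sum_congr rfl fun d _ => by ring

lemma sum_extend {k i : ℕ} (h : i + 1 ≤ k) (f : Fin k → ℝ)
    (hf : ∀ t : Fin k, ¬((t : ℕ) ≤ i) → f t = 0) :
    ∑ t, f t = ∑ j : Fin (i+1), f (Fin.castLE h j) := by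
  have e1 : ∑ j : Fin (i+1), f (Fin.castLE h j)
      = ∑ t ∈ Finset.univ.map (Fin.castLEEmb h), f t := by
    rw [Finset.sum_map]
    exact Finset.sum_congr rfl fun j _ => by simp
  rw [e1]
  symm
  apply Finset.sum_subset (Finset.subset_univ _)
  intro t _ ht
  apply hf
  intro hle
  apply ht
  simp only [Finset.mem_map, Fin.castLEEmb_apply, Finset.mem_univ, true_and]
  exact ⟨⟨(t : ℕ), by omega⟩, Fin.ext (by simp)⟩

lemma quad_upper' {k : ℕ} (Rel : Fin k → Fin n → ℝ) (c : Fin k → ℝ) (D : ℝ)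
    (hdiag : ∀ t, c t ≠ 0 → (∑ d, Rel t d ^ 2) ≤ D) :
    ∑ t, ∑ t', c t * c t' * (∑ d, Rel t d * Rel t' d)
      ≤ (D + Real.sqrt (∑ t, ∑ t',
          if t ≠ t' then (∑ d, Rel t d * Rel t' d) ^ 2 else 0)) * ∑ t, c t ^ 2 := by
  have h := quad_upper (Matrix.of fun t t' => ∑ d, Rel t d * Rel t' d) c D ?_
  · exact h
  · intro t hct
    have : (Matrix.of fun t t' => ∑ d, Rel t d * Rel t' d) t t = ∑ d, Rel t d ^ 2 := by
      show (∑ d, Rel t d * Rel t d) = ∑ d, Rel t d ^ 2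
      exact Finset.sum_congr rfl fun d _ => (pow_two (Rel t d)).symm
    rw [this]
    exact hdiag t hct

lemma quad_lower' {k : ℕ} (Rel : Fin k → Fin n → ℝ) (c : Fin k → ℝ) (D : ℝ)
    (hdiag : ∀ t, c t ≠ 0 → D ≤ ∑ d, Rel t d ^ 2) :
    (D - Real.sqrt (∑ t, ∑ t',
        if t ≠ t' then (∑ d, Rel t d * Rel t' d) ^ 2 else 0)) * ∑ t, c t ^ 2
      ≤ ∑ t, ∑ t', c t * c t' * (∑ d, Rel t d * Rel t' d) := by
  have h := quad_lower (Matrix.of fun t t' => ∑ d, Rel t d * Rel t' d) c D ?_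
  · exact h
  · intro t hct
    have e : (Matrix.of fun t t' => ∑ d, Rel t d * Rel t' d) t t = ∑ d, Rel t d ^ 2 := by
      show (∑ d, Rel t d * Rel t d) = ∑ d, Rel t d ^ 2
      exact Finset.sum_congr rfl fun d _ => (pow_two (Rel t d)).symm
    rw [e]
    exact hdiag t hct

end Helpers

/-- Theorem 1 of the paper. -/
theorem theorem_population {m n k : ℕ} (Rel : Fin k → Fin n → ℝ)
    (hnorm : ∀ d, ∑ t, Rel t d ^ 2 = 1)
    (S : Matrix (Fin n) (Fin n) ℝ)
    (hS : ∀ d d', S d d' = ∑ t, Rel t d * Rel t d')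
    (Δ : Fin k → ℝ) (hΔ : ∀ t, Δ t = Real.sqrt (∑ d, Rel t d ^ 2))
    (hsort : ∀ t t' : Fin k, t ≤ t' → Δ t' ≤ Δ t)
    (Δpad : ℕ → ℝ)
    (hΔpad : ∀ i : ℕ, Δpad i = if h : i < k then Δ ⟨i, h⟩ else 0)
    (μ : ℝ)
    (hμ : μ = Real.sqrt (∑ t, ∑ t',
      if t ≠ t' then (∑ d, Rel t d * Rel t' d) ^ 2 else 0))
    (A : Matrix (Fin m) (Fin n) ℝ)
    (P : Matrix (Fin m) (Fin m) ℝ) (hPsym : Pᵀ = P) (hPidem : P * P = P)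
    (σh : ℕ → ℝ) (hσ : IsSingularValues (P * A) σh)
    (ε : ℝ) (hε : ε = specNorm (S - (P * A)ᵀ * (P * A))) :
    ∀ i, σh i ^ 2 ∈ Set.Icc (Δpad i ^ 2 - (ε + μ)) (Δpad i ^ 2 + (ε + μ)) := by
  classical
  obtain ⟨hmono, hnn, hzero, hmul⟩ := hσ
  set M : Matrix (Fin n) (Fin n) ℝ := (P * A)ᵀ * (P * A) with hM
  have hH : M.IsHermitian := by
    rw [hM, ← Matrix.conjTranspose_eq_transpose_of_trivial]
    exact Matrix.isHermitian_conjTranspose_mul_self (P * A)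
  set N : Matrix (Fin n) (Fin n) ℝ := S - (P * A)ᵀ * (P * A) with hN
  have hε0 : 0 ≤ ε := hε ▸ specNorm_nonneg' N
  have hμ0 : 0 ≤ μ := hμ ▸ Real.sqrt_nonneg _
  have hΔnn : ∀ t, 0 ≤ Δ t := fun t => (hΔ t) ▸ Real.sqrt_nonneg _
  have hΔsq : ∀ t, Δ t ^ 2 = ∑ d, Rel t d ^ 2 := fun t => by
    rw [hΔ t, Real.sq_sqrt (Finset.sum_nonneg fun d _ => sq_nonneg _)]
  have hΔpadnn : ∀ i, 0 ≤ Δpad i := by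
    intro i
    rw [hΔpad i]
    split
    · exact hΔnn _
    · exact le_refl 0
  -- quadratic forms
  have hMSN : ∀ x : Fin n → ℝ, x ⬝ᵥ M.mulVec x = x ⬝ᵥ S.mulVec x - x ⬝ᵥ N.mulVec x := by
    intro x
    rw [hN, hM, Matrix.sub_mulVec, dotProduct_sub]
    ring
  have hNbound : ∀ x : Fin n → ℝ, (∑ d, x d ^ 2) = 1 → |x ⬝ᵥ N.mulVec x| ≤ ε := by
    intro x hx
    rw [hε]
    exact abs_dot_mulVec_le _ x hx
  have hcount := hmul hH
  set b := hH.eigenvectorBasis with hb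
  intro i
  rw [Set.mem_Icc]
  constructor
  · -- LOWER BOUND
    by_cases hik : i < k
    swap
    · -- i ≥ k : Δpad i = 0
      have hz : Δpad i = 0 := by rw [hΔpad]; exact dif_neg hik
      rw [hz]
      have := sq_nonneg (σh i)
      nlinarith
    · by_cases hDμ : Δpad i ^ 2 ≤ μ
      · have := sq_nonneg (σh i)
        nlinarith
      push_neg at hDμ
      have hik' : i + 1 ≤ k := hik
      have hΔi : Δpad i = Δ ⟨i, hik⟩ := by rw [hΔpad]; exact dif_pos hik
      set g : Fin (i+1) → EuclideanSpace ℝ (Fin n) :=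
        fun j => WithLp.toLp 2 (fun d => Rel (Fin.castLE hik' j) d : Fin n → ℝ) with hg
      -- extension of coefficients
      have ext_lemma : ∀ a : Fin (i+1) → ℝ, ∃ a' : Fin k → ℝ,
          (∀ t : Fin k, ¬((t : ℕ) ≤ i) → a' t = 0) ∧
          (∀ j : Fin (i+1), a' (Fin.castLE hik' j) = a j) ∧
          (∀ d, (∑ j, a j • g j) d = ∑ t, a' t * Rel t d) ∧
          (∑ t, a' t ^ 2 = ∑ j, a j ^ 2) := by
        intro a
        set a' : Fin k → ℝ :=
          fun t => ∑ j, if Fin.castLE hik' j = t then a j else 0 with ha'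
        have key1 : ∀ w : Fin k → ℝ, ∑ t, a' t * w t = ∑ j, a j * w (Fin.castLE hik' j) := by
          intro w
          calc ∑ t, a' t * w t
              = ∑ t, ∑ j, (if Fin.castLE hik' j = t then a j * w t else 0) := by
                refine Finset.sum_congr rfl fun t _ => ?_
                simp only [ha']
                rw [Finset.sum_mul]
                refine Finset.sum_congr rfl fun j _ => ?_
                split <;> simp
            _ = ∑ j, ∑ t, (if Fin.castLE hik' j = t then a j * w t else 0) :=
                Finset.sum_comm
            _ = ∑ j, a j * w (Fin.castLE hik' j) := by
                refine Finset.sum_congr rfl fun j _ => ?_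
                rw [Finset.sum_ite_eq]
                simp
        have key2 : ∀ j : Fin (i+1), a' (Fin.castLE hik' j) = a j := by
          intro j0
          simp only [ha']
          have : ∀ j : Fin (i+1),
              (if Fin.castLE hik' j = Fin.castLE hik' j0 then a j else 0)
                = (if j = j0 then a j else 0) := by
            intro j
            by_cases h : j = j0
            · simp [h]
            · have : Fin.castLE hik' j ≠ Fin.castLE hik' j0 := by
                intro hc
                exact h (Fin.castLE_injective _ hc)
              simp [h, this]
          rw [Finset.sum_congr rfl fun j _ => this j]
          rw [Finset.sum_ite_eq' Finset.univ j0 a]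
          simp
        refine ⟨a', ?_, key2, ?_, ?_⟩
        · intro t ht
          simp only [ha']
          refine Finset.sum_eq_zero fun j _ => ?_
          have : Fin.castLE hik' j ≠ t := by
            intro hc
            apply ht
            rw [← hc]
            simpa using Nat.lt_succ_iff.mp j.isLt
          simp [this]
        · intro d
          have happ : (∑ j, a j • g j) d = ∑ j, a j * Rel (Fin.castLE hik' j) d := by
            simp only [WithLp.ofLp_sum, WithLp.ofLp_smul, Finset.sum_apply, Pi.smul_apply, smul_eq_mul]
            rfl
          rw [happ, key1 (fun t => Rel t d)]
        · calc ∑ t, a' t ^ 2 = ∑ t, a' t * a' t :=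
                Finset.sum_congr rfl fun t _ => pow_two (a' t)
            _ = ∑ j, a j * a' (Fin.castLE hik' j) := key1 a'
            _ = ∑ j, a j ^ 2 := by
                refine Finset.sum_congr rfl fun j _ => ?_
                rw [key2 j, pow_two]
      -- diagonal estimate for supported coefficients
      have hdiag' : ∀ a' : Fin k → ℝ, (∀ t : Fin k, ¬((t : ℕ) ≤ i) → a' t = 0) →
          ∀ t : Fin k, a' t ≠ 0 → Δpad i ^ 2 ≤ ∑ d, Rel t d ^ 2 := by
        intro a' ha' t hct
        have hti : (t : ℕ) ≤ i := by
          by_contra hc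
          exact hct (ha' t hc)
        rw [hΔi, ← hΔsq t]
        have hle : t ≤ (⟨i, hik⟩ : Fin k) := by
          rw [Fin.le_def]
          exact hti
        exact pow_le_pow_left₀ (hΔnn _) (hsort t ⟨i, hik⟩ hle) 2
      -- linear independence of g
      have hgli : LinearIndependent ℝ g := by
        rw [Fintype.linearIndependent_iff]
        intro a ha j
        obtain ⟨a', h0a, hcast, happ, hsq⟩ := ext_lemma a
        have hxd : ∀ d, (0:ℝ) = ∑ t, a' t * Rel t d := by
          intro d
          rw [← happ d, ha]
          rfl
        have hbeta := beta_eq Rel a' (fun d => ∑ t, a' t * Rel t d) (fun d => rfl)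
        have h0sum : (0:ℝ) = ∑ t, ∑ t', a' t * a' t' * (∑ d, Rel t d * Rel t' d) := by
          rw [← hbeta]
          symm
          refine Finset.sum_eq_zero fun d _ => ?_
          show (∑ t, a' t * Rel t d) ^ 2 = 0
          rw [← hxd d]
          exact zero_pow two_ne_zero
        have hql := quad_lower' Rel a' (Δpad i ^ 2) (hdiag' a' h0a)
        rw [← hμ] at hql
        have hs0 : ∑ t, a' t ^ 2 = 0 := by
          have hnn' : 0 ≤ ∑ t, a' t ^ 2 := Finset.sum_nonneg fun t _ => sq_nonneg _
          nlinarith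
        have hall : ∀ t, a' t = 0 := by
          intro t
          have := (Finset.sum_eq_zero_iff_of_nonneg
            (fun t _ => sq_nonneg (a' t))).mp hs0 t (Finset.mem_univ t)
          exact pow_eq_zero_iff two_ne_zero |>.mp this
        rw [← hcast j]
        exact hall _
      set V := Submodule.span ℝ (Set.range g) with hVdef
      have hVrank : Module.finrank ℝ V = i + 1 := by
        rw [hVdef, finrank_span_eq_card hgli, Fintype.card_fin]
      have hin : i < n := by
        have h1 : Module.finrank ℝ V ≤ n := by
          have := Submodule.finrank_le V
          rwa [finrank_euclideanSpace, Fintype.card_fin] at this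
        omega
      set Tl := Finset.univ.filter (fun j : Fin n => hH.eigenvalues j ≤ σh i ^ 2) with hTl
      set W := Submodule.span ℝ (⇑b '' ↑Tl) with hWdef
      have hWrank : n - i ≤ Module.finrank ℝ W := by
        rw [hWdef, finrank_span_basis_image b Tl, hTl]
        have hcards := count_transfer (fun j : Fin n => σh (j : ℕ) ^ 2) hH.eigenvalues
          hcount (fun r => r ≤ σh i ^ 2)
        rw [← hcards]
        refine le_trans (le_card_filter_ge hin) (Finset.card_le_card ?_)
        intro j hj
        simp only [Finset.mem_filter, Finset.mem_univ, true_and] at hj ⊢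
        exact pow_le_pow_left₀ (hnn _) (hmono hj) 2
      have hdim : n < Module.finrank ℝ V + Module.finrank ℝ W := by omega
      obtain ⟨x, hxV, hxW, hx1⟩ := exists_unit_mem_inf V W hdim
      obtain ⟨a, ha⟩ := (Submodule.mem_span_range_iff_exists_fun ℝ).mp hxV
      obtain ⟨a', h0a, hcast, happ, hsq⟩ := ext_lemma a
      have hxd : ∀ d, x d = ∑ t, a' t * Rel t d := by
        intro d
        rw [← ha]
        exact happ d
      have hbeta := beta_eq Rel a' x hxd
      have h1G : (1:ℝ) = ∑ t, ∑ t', a' t * a' t' * (∑ d, Rel t d * Rel t' d) := by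
        rw [← hbeta]
        exact hx1.symm
      have hql := quad_lower' Rel a' (Δpad i ^ 2) (hdiag' a' h0a)
      rw [← hμ] at hql
      have halpha := alpha_ineq Rel a' x hxd
      rw [hx1, one_pow] at halpha
      have hs'nn : 0 ≤ ∑ t, a' t ^ 2 := Finset.sum_nonneg fun t _ => sq_nonneg _
      have hs'pos : 0 < ∑ t, a' t ^ 2 := by
        rcases eq_or_lt_of_le hs'nn with h | h
        · exfalso
          rw [← h] at halpha
          simp at halpha
          linarith
        · exact h
      have hdotS := dot_S Rel S hS x
      have hQ : Δpad i ^ 2 - μ ≤ x ⬝ᵥ S.mulVec x := by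
        rw [hdotS]
        nlinarith
      -- Rayleigh upper bound on W
      have hxMle : x ⬝ᵥ M.mulVec x ≤ σh i ^ 2 := by
        rw [dot_mulVec_eq_sum_eigen hH x]
        have hterm : ∀ j, hH.eigenvalues j * (b.repr x j) ^ 2
            ≤ σh i ^ 2 * (b.repr x j) ^ 2 := by
          intro j
          by_cases hj : j ∈ Tl
          · rw [hTl, Finset.mem_filter] at hj
            exact mul_le_mul_of_nonneg_right hj.2 (sq_nonneg _)
          · have hjz : b.repr x j = 0 := by
              refine repr_eq_zero_of_mem_span b ↑Tl x hxW ?_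
              simpa using hj
            rw [hjz]
            simp
        calc ∑ j, hH.eigenvalues j * (b.repr x j) ^ 2
            ≤ ∑ j, σh i ^ 2 * (b.repr x j) ^ 2 := Finset.sum_le_sum fun j _ => hterm j
          _ = σh i ^ 2 * ∑ j, (b.repr x j) ^ 2 := by rw [← Finset.mul_sum]
          _ = σh i ^ 2 := by
              rw [← sum_sq_eq_sum_repr_sq b x, hx1, mul_one]
      have hNb := hNbound x hx1
      have hMSNx := hMSN x
      have habs := (abs_le.mp hNb).2
      linarith
  · -- UPPER BOUND
    by_cases hin : n ≤ i
    · rw [hzero i hin]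
      have := hΔpadnn i
      nlinarith
    push_neg at hin
    set T := Finset.univ.filter (fun j : Fin n => σh i ^ 2 ≤ hH.eigenvalues j) with hT
    set V := Submodule.span ℝ (⇑b '' ↑T) with hVdef
    have hVrank : i + 1 ≤ Module.finrank ℝ V := by
      rw [hVdef, finrank_span_basis_image b T, hT]
      have hcards := count_transfer (fun j : Fin n => σh (j : ℕ) ^ 2) hH.eigenvalues
        hcount (fun r => σh i ^ 2 ≤ r)
      rw [← hcards]
      refine le_trans (le_card_filter_le hin) (Finset.card_le_card ?_)
      intro j hj
      simp only [Finset.mem_filter, Finset.mem_univ, true_and] at hj ⊢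
      exact pow_le_pow_left₀ (hnn _) (hmono hj) 2
    set Rel2 : Fin (min i k) → Fin n → ℝ :=
      fun j d => Rel (Fin.castLE (min_le_right i k) j) d with hRel2
    set K := LinearMap.ker (rowsMap Rel2) with hKdef
    have hKrank : n - i ≤ Module.finrank ℝ K := by
      refine le_trans ?_ (finrank_ker_rowsMap Rel2)
      omega
    have hdim : n < Module.finrank ℝ V + Module.finrank ℝ K := by omega
    obtain ⟨x, hxV, hxK, hx1⟩ := exists_unit_mem_inf V K hdim
    set c : Fin k → ℝ := fun t => ∑ d, Rel t d * x d with hc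
    have hc0 : ∀ t : Fin k, (t : ℕ) < i → c t = 0 := by
      intro t ht
      have ht' : (t : ℕ) < min i k := lt_min ht t.isLt
      have hker : rowsMap Rel2 x = 0 := (LinearMap.mem_ker).mp hxK
      have := congrFun hker ⟨(t : ℕ), ht'⟩
      simp only [hc]
      have hte : Fin.castLE (min_le_right i k) (⟨(t : ℕ), ht'⟩ : Fin (min i k)) = t :=
        Fin.ext rfl
      calc ∑ d, Rel t d * x d
          = ∑ d, Rel2 ⟨(t : ℕ), ht'⟩ d * x d := by
            refine Finset.sum_congr rfl fun d _ => ?_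
            simp only [hRel2]
            rw [hte]
        _ = 0 := this
    -- Rayleigh lower bound on V
    have hxMge : σh i ^ 2 ≤ x ⬝ᵥ M.mulVec x := by
      rw [dot_mulVec_eq_sum_eigen hH x]
      have hterm : ∀ j, σh i ^ 2 * (b.repr x j) ^ 2
          ≤ hH.eigenvalues j * (b.repr x j) ^ 2 := by
        intro j
        by_cases hj : j ∈ T
        · rw [hT, Finset.mem_filter] at hj
          exact mul_le_mul_of_nonneg_right hj.2 (sq_nonneg _)
        · have hjz : b.repr x j = 0 := by
            refine repr_eq_zero_of_mem_span b ↑T x hxV ?_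
            simpa using hj
          rw [hjz]
          simp
      calc σh i ^ 2 = σh i ^ 2 * ∑ j, (b.repr x j) ^ 2 := by
            rw [← sum_sq_eq_sum_repr_sq b x, hx1, mul_one]
        _ = ∑ j, σh i ^ 2 * (b.repr x j) ^ 2 := by rw [← Finset.mul_sum]
        _ ≤ ∑ j, hH.eigenvalues j * (b.repr x j) ^ 2 := Finset.sum_le_sum fun j _ => hterm j
    -- quadratic upper bound for x ⬝ᵥ S x
    have hdotS := dot_S Rel S hS x
    have hSle : x ⬝ᵥ S.mulVec x ≤ Δpad i ^ 2 + μ := by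
      rw [hdotS]
      set y : Fin n → ℝ := fun d => ∑ t, c t * Rel t d with hy
      have hsxy : ∑ t, c t ^ 2 = ∑ d, y d * x d := by
        calc ∑ t, c t ^ 2 = ∑ t, c t * (∑ d, Rel t d * x d) := by
              refine Finset.sum_congr rfl fun t _ => ?_
              rw [pow_two, hc]
          _ = ∑ t, ∑ d, c t * (Rel t d * x d) := by
              refine Finset.sum_congr rfl fun t _ => ?_
              rw [Finset.mul_sum]
          _ = ∑ d, ∑ t, c t * (Rel t d * x d) := Finset.sum_comm
          _ = ∑ d, y d * x d := by
              refine Finset.sum_congr rfl fun d _ => ?_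
              rw [hy, Finset.sum_mul]
              exact Finset.sum_congr rfl fun t _ => by ring
      have hcs : (∑ t, c t ^ 2) ^ 2 ≤ (∑ d, y d ^ 2) * (∑ d, x d ^ 2) := by
        rw [hsxy]
        exact Finset.sum_mul_sq_le_sq_mul_sq _ _ _
      rw [hx1, mul_one] at hcs
      have hbeta := beta_eq Rel c y (fun d => rfl)
      have hqu := quad_upper' Rel c (Δpad i ^ 2) ?_
      swap
      · intro t hct
        have hti : i ≤ (t : ℕ) := by
          by_contra hlt
          exact hct (hc0 t (by omega))
        have hik : i < k := lt_of_le_of_lt hti t.isLt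
        rw [hΔpad i, dif_pos hik, ← hΔsq t]
        have hle : (⟨i, hik⟩ : Fin k) ≤ t := by
          rw [Fin.le_def]
          exact hti
        exact pow_le_pow_left₀ (hΔnn _) (hsort ⟨i, hik⟩ t hle) 2
      rw [← hμ] at hqu
      rw [hbeta] at hcs
      have hsnn : 0 ≤ ∑ t, c t ^ 2 := Finset.sum_nonneg fun t _ => sq_nonneg _
      show (∑ t, c t ^ 2) ≤ Δpad i ^ 2 + μ
      rcases eq_or_lt_of_le hsnn with hs0 | hs0
      · rw [← hs0]
        have h1 := sq_nonneg (Δpad i)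
        linarith
      · have h := le_trans hcs hqu
        have h2 : (∑ t, c t ^ 2) * (∑ t, c t ^ 2)
            ≤ (Δpad i ^ 2 + μ) * (∑ t, c t ^ 2) := by
          rw [← pow_two]
          exact h
        exact le_of_mul_le_mul_right h2 hs0
    have hNb := hNbound x hx1
    have hMSNx := hMSN x
    have habs := (abs_le.mp hNb).1
    linarith
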